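/- Let U ⊆ ℝ^d be open and let x₀ ∈ U. Let W : U → Matrix (Fin n) (Fin r) ℂ, G_μ : U → Matrix (Fin n) (Fin n) ℂ (Hermitian valued), and A_μ : U → Matrix (Fin r) (Fin r) ℂ (anti-Hermitian valued) be twice continuously differentiable with ∂_μ W = G_μ W − W (A_μ)ᵀ on U for every μ. Suppose W(x₀) = Σ_{k=1}^r √λ_k φ_k (e_k)† where λ_1,…,λ_r > 0 and φ_1,…,φ_r is an orthonormal family in ℂⁿ. Let g ∈ Matrix (Fin d) (Fin d) ℝ be symmetric positive definite with inverse entries g^{μν}, and set F_{μν} := ∂_μ A_ν − ∂_ν A_μ + [A_μ, A_ν] evaluated at x₀. Then −(1/4) Σ_{μ,ν,α,β=1}^d g^{μα} g^{νβ} tr(F_{μν} F_{αβ}) = − Σ_{μ,ν,α,β=1}^d g^{μα} g^{νβ} Σ_{ℓ,m=1}^r (λ_ℓ λ_m/(λ_ℓ + λ_m)²) ⟨φ_ℓ, [G_μ(x₀), G_ν(x₀)] φ_m⟩ ⟨φ_m, [G_α(x₀), G_β(x₀)] φ_ℓ⟩. -/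

import Mathlib

open Matrix

/-- The partial derivative `∂_μ` of a matrix-valued function on `ℝ^d`, taken entrywise. -/
noncomputable def matPDeriv {d n m : ℕ} (μ : Fin d)
    (f : (Fin d → ℝ) → Matrix (Fin n) (Fin m) ℂ) (x : Fin d → ℝ) :
    Matrix (Fin n) (Fin m) ℂ :=
  Matrix.of fun i j => fderiv ℝ (fun y => f y i j) x (Pi.single μ 1)

section Aux

lemma swap_second_aux {d : ℕ} {U : Set (Fin d → ℝ)} (hU : IsOpen U) {x₀ : Fin d → ℝ}
    (hx₀ : x₀ ∈ U) {f : (Fin d → ℝ) → ℂ} (hf : ContDiffOn ℝ 2 f U) (v w : Fin d → ℝ) :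
    fderiv ℝ (fun x => fderiv ℝ f x v) x₀ w = fderiv ℝ (fun x => fderiv ℝ f x w) x₀ v := by
  have hca : ContDiffAt ℝ 2 f x₀ := hf.contDiffAt (hU.mem_nhds hx₀)
  have hsym : IsSymmSndFDerivAt ℝ f x₀ := hca.isSymmSndFDerivAt (by simp)
  have hder : DifferentiableAt ℝ (fderiv ℝ f) x₀ := by
    have := hca.fderiv_right (m := 1) (by norm_num)
    exact this.differentiableAt one_ne_zero
  have key : ∀ u z : Fin d → ℝ, fderiv ℝ (fun x => fderiv ℝ f x u) x₀ z
      = fderiv ℝ (fderiv ℝ f) x₀ z u := by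
    intro u z
    have hcomp : (fun x => fderiv ℝ f x u)
        = (ContinuousLinearMap.apply ℝ ℂ u) ∘ (fderiv ℝ f) := rfl
    rw [hcomp, fderiv_comp x₀ (ContinuousLinearMap.apply ℝ ℂ u).differentiableAt hder]
    simp
  rw [key v w, key w v, hsym.eq w v]

lemma mul_entry_diff {d n m p : ℕ} {x₀ : Fin d → ℝ}
    {P : (Fin d → ℝ) → Matrix (Fin n) (Fin m) ℂ} {Q : (Fin d → ℝ) → Matrix (Fin m) (Fin p) ℂ}
    (hP : ∀ i j, DifferentiableAt ℝ (fun x => P x i j) x₀)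
    (hQ : ∀ i j, DifferentiableAt ℝ (fun x => Q x i j) x₀) :
    ∀ i j, DifferentiableAt ℝ (fun x => (P x * Q x) i j) x₀ := by
  intro i j
  have h : (fun x => (P x * Q x) i j) = fun x => ∑ k, P x i k * Q x k j := by
    funext x; simp [Matrix.mul_apply]
  rw [h]
  exact DifferentiableAt.fun_sum fun k _ => (hP i k).mul (hQ k j)

lemma matPDeriv_mul {d n m p : ℕ} (μ : Fin d) {x₀ : Fin d → ℝ}
    (P : (Fin d → ℝ) → Matrix (Fin n) (Fin m) ℂ) (Q : (Fin d → ℝ) → Matrix (Fin m) (Fin p) ℂ)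
    (hP : ∀ i j, DifferentiableAt ℝ (fun x => P x i j) x₀)
    (hQ : ∀ i j, DifferentiableAt ℝ (fun x => Q x i j) x₀) :
    matPDeriv μ (fun x => P x * Q x) x₀
      = matPDeriv μ P x₀ * Q x₀ + P x₀ * matPDeriv μ Q x₀ := by
  ext i j
  simp only [matPDeriv, of_apply, Matrix.add_apply, mul_apply]
  rw [fderiv_fun_sum (A := fun k y => P y i k * Q y k j) (fun k _ => (hP i k).mul (hQ k j))]
  rw [← Finset.sum_add_distrib]
  simp only [ContinuousLinearMap.coe_sum', Finset.sum_apply]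
  congr 1; funext k
  rw [fderiv_fun_mul (hP i k) (hQ k j)]
  simp [smul_eq_mul]; ring

lemma matPDeriv_sub {d n m : ℕ} (μ : Fin d) {x₀ : Fin d → ℝ}
    (P Q : (Fin d → ℝ) → Matrix (Fin n) (Fin m) ℂ)
    (hP : ∀ i j, DifferentiableAt ℝ (fun x => P x i j) x₀)
    (hQ : ∀ i j, DifferentiableAt ℝ (fun x => Q x i j) x₀) :
    matPDeriv μ (fun x => P x - Q x) x₀ = matPDeriv μ P x₀ - matPDeriv μ Q x₀ := by
  ext i j
  simp only [matPDeriv, of_apply, Matrix.sub_apply]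
  rw [fderiv_fun_sub (hP i j) (hQ i j)]
  rfl

lemma matPDeriv_transpose {d n m : ℕ} (μ : Fin d) {x₀ : Fin d → ℝ}
    (P : (Fin d → ℝ) → Matrix (Fin n) (Fin m) ℂ) :
    matPDeriv μ (fun x => (P x)ᵀ) x₀ = (matPDeriv μ P x₀)ᵀ := rfl

lemma matPDeriv_congr_nhds {d n m : ℕ} (μ : Fin d) {x₀ : Fin d → ℝ} {U : Set (Fin d → ℝ)}
    (hU : IsOpen U) (hx₀ : x₀ ∈ U)
    {P Q : (Fin d → ℝ) → Matrix (Fin n) (Fin m) ℂ} (h : ∀ x ∈ U, P x = Q x) :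
    matPDeriv μ P x₀ = matPDeriv μ Q x₀ := by
  ext i j
  simp only [matPDeriv, of_apply]
  have : (fun x => P x i j) =ᶠ[nhds x₀] (fun x => Q x i j) :=
    Filter.eventuallyEq_of_mem (hU.mem_nhds hx₀) (fun x hx => by rw [h x hx])
  rw [this.fderiv_eq]

lemma fderiv_conj' {d : ℕ} {x₀ : Fin d → ℝ} (f : (Fin d → ℝ) → ℂ) (v : Fin d → ℝ) :
    fderiv ℝ (fun x => (starRingEnd ℂ) (f x)) x₀ v = (starRingEnd ℂ) (fderiv ℝ f x₀ v) := by
  have h : (fun x => (starRingEnd ℂ) (f x)) = (Complex.conjCLE : ℂ → ℂ) ∘ f := rfl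
  rw [h, Complex.conjCLE.comp_fderiv]
  rfl

lemma ct_transpose_of_anti {r : ℕ} {F : Matrix (Fin r) (Fin r) ℂ} (h : Fᴴ = -F) :
    (Fᵀ)ᴴ = -(Fᵀ) := by
  ext i j
  have := Matrix.ext_iff.mpr h j i
  simpa [Matrix.conjTranspose_apply, Matrix.transpose_apply, Matrix.neg_apply] using this

end Aux

/-- Theorem 1 of the paper. For a purification amplitude `W` satisfying the
Uhlmann horizontal-lift equation `∂_μ W = G_μ W − W (A_μ)ᵀ` (with `G_μ` Hermitian and `A_μ`
anti-Hermitian, all twice continuously differentiable) such that at `x₀` the amplitude is in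
the eigenbasis gauge `W(x₀) = Σ_k √λ_k |φ_k⟩⟨e_k|`, the scalar curvature measure
`𝒞 = −(1/4) g^{μα} g^{νβ} tr(F_{μν} F_{αβ})` built from the Uhlmann curvature
`F_{μν} = ∂_μ A_ν − ∂_ν A_μ + [A_μ, A_ν]` equals its spectral-decomposition expression in
terms of the commutators `[G_μ, G_ν]`. -/
theorem curvature_measure_spectral_decomposition {d n r : ℕ}
    (U : Set (Fin d → ℝ)) (hU : IsOpen U) (x₀ : Fin d → ℝ) (hx₀ : x₀ ∈ U)
    (W : (Fin d → ℝ) → Matrix (Fin n) (Fin r) ℂ)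
    (G : Fin d → (Fin d → ℝ) → Matrix (Fin n) (Fin n) ℂ)
    (A : Fin d → (Fin d → ℝ) → Matrix (Fin r) (Fin r) ℂ)
    (hWC2 : ∀ i j, ContDiffOn ℝ 2 (fun x => W x i j) U)
    (hGC2 : ∀ μ i j, ContDiffOn ℝ 2 (fun x => G μ x i j) U)
    (hAC2 : ∀ μ i j, ContDiffOn ℝ 2 (fun x => A μ x i j) U)
    (hGHerm : ∀ μ, ∀ x ∈ U, (G μ x).IsHermitian)
    (hAAnti : ∀ μ, ∀ x ∈ U, (A μ x)ᴴ = -(A μ x))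
    (hlift : ∀ μ, ∀ x ∈ U, matPDeriv μ W x = G μ x * W x - W x * (A μ x)ᵀ)
    (lam : Fin r → ℝ) (hlam : ∀ k, 0 < lam k)
    (φ : Fin r → (Fin n → ℂ))
    (hortho : ∀ k l, star (φ k) ⬝ᵥ φ l = if k = l then (1 : ℂ) else 0)
    (hW₀ : W x₀ = Matrix.of fun i k => (Real.sqrt (lam k) : ℂ) * φ k i)
    (g : Matrix (Fin d) (Fin d) ℝ) (hgsymm : g.IsSymm) (hgpos : g.PosDef) :
    -(1/4 : ℂ) * ∑ μ : Fin d, ∑ ν : Fin d, ∑ α : Fin d, ∑ β : Fin d,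
        ((g⁻¹ μ α : ℝ) : ℂ) * ((g⁻¹ ν β : ℝ) : ℂ) *
          Matrix.trace
            ((matPDeriv μ (A ν) x₀ - matPDeriv ν (A μ) x₀
                + (A μ x₀ * A ν x₀ - A ν x₀ * A μ x₀)) *
             (matPDeriv α (A β) x₀ - matPDeriv β (A α) x₀
                + (A α x₀ * A β x₀ - A β x₀ * A α x₀)))
      = -∑ μ : Fin d, ∑ ν : Fin d, ∑ α : Fin d, ∑ β : Fin d,
          ((g⁻¹ μ α : ℝ) : ℂ) * ((g⁻¹ ν β : ℝ) : ℂ) *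
            ∑ ℓ : Fin r, ∑ m : Fin r,
              ((lam ℓ * lam m / (lam ℓ + lam m) ^ 2 : ℝ) : ℂ) *
                (star (φ ℓ) ⬝ᵥ (G μ x₀ * G ν x₀ - G ν x₀ * G μ x₀).mulVec (φ m)) *
                (star (φ m) ⬝ᵥ (G α x₀ * G β x₀ - G β x₀ * G α x₀).mulVec (φ ℓ)) := by
  have hWd : ∀ i j, DifferentiableAt ℝ (fun x => W x i j) x₀ := fun i j =>
    ((hWC2 i j).contDiffAt (hU.mem_nhds hx₀)).differentiableAt (by norm_num)
  have hGd : ∀ μ i j, DifferentiableAt ℝ (fun x => G μ x i j) x₀ := fun μ i j =>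
    ((hGC2 μ i j).contDiffAt (hU.mem_nhds hx₀)).differentiableAt (by norm_num)
  have hAd : ∀ μ i j, DifferentiableAt ℝ (fun x => A μ x i j) x₀ := fun μ i j =>
    ((hAC2 μ i j).contDiffAt (hU.mem_nhds hx₀)).differentiableAt (by norm_num)
  -- Hermiticity of the derivative of G at x₀
  have hdGH : ∀ μ ν : Fin d, (matPDeriv ν (G μ) x₀)ᴴ = matPDeriv ν (G μ) x₀ := by
    intro μ ν
    ext i j
    simp only [conjTranspose_apply, matPDeriv, of_apply]
    rw [show (star (fderiv ℝ (fun y => G μ y j i) x₀ (Pi.single ν 1)) : ℂ)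
        = (starRingEnd ℂ) (fderiv ℝ (fun y => G μ y j i) x₀ (Pi.single ν 1)) from rfl]
    rw [← fderiv_conj' (fun y => G μ y j i) (Pi.single ν 1)]
    have hev : (fun x => (starRingEnd ℂ) (G μ x j i)) =ᶠ[nhds x₀] (fun x => G μ x i j) := by
      refine Filter.eventuallyEq_of_mem (hU.mem_nhds hx₀) (fun x hx => ?_)
      have h := Matrix.ext_iff.mpr (hGHerm μ x hx).eq i j
      simpa [Matrix.conjTranspose_apply] using h
    rw [hev.fderiv_eq]
  -- anti-Hermiticity of the derivative of A at x₀
  have hdAA : ∀ μ ν : Fin d, (matPDeriv ν (A μ) x₀)ᴴ = -(matPDeriv ν (A μ) x₀) := by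
    intro μ ν
    ext i j
    simp only [conjTranspose_apply, matPDeriv, of_apply, Matrix.neg_apply]
    rw [show (star (fderiv ℝ (fun y => A μ y j i) x₀ (Pi.single ν 1)) : ℂ)
        = (starRingEnd ℂ) (fderiv ℝ (fun y => A μ y j i) x₀ (Pi.single ν 1)) from rfl]
    rw [← fderiv_conj' (fun y => A μ y j i) (Pi.single ν 1)]
    have hev : (fun x => (starRingEnd ℂ) (A μ x j i)) =ᶠ[nhds x₀] (fun x => -(A μ x i j)) := by
      refine Filter.eventuallyEq_of_mem (hU.mem_nhds hx₀) (fun x hx => ?_)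
      have h := Matrix.ext_iff.mpr (hAAnti μ x hx) i j
      simpa [Matrix.conjTranspose_apply, Matrix.neg_apply] using h
    rw [hev.fderiv_eq, fderiv_fun_neg]
    rfl
  -- key identity (*) : W₀ Fᵀ = (∂μGν − ∂νGμ) W₀ − [Gμ,Gν] W₀
  have key1 : ∀ μ ν : Fin d, W x₀ * (matPDeriv μ (A ν) x₀ - matPDeriv ν (A μ) x₀
        + (A μ x₀ * A ν x₀ - A ν x₀ * A μ x₀))ᵀ
      = (matPDeriv μ (G ν) x₀ - matPDeriv ν (G μ) x₀) * W x₀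
        - (G μ x₀ * G ν x₀ - G ν x₀ * G μ x₀) * W x₀ := by
    intro μ ν
    have expand : ∀ κ τ : Fin d, matPDeriv τ (fun x => G κ x * W x - W x * (A κ x)ᵀ) x₀
        = matPDeriv τ (G κ) x₀ * W x₀
          + G κ x₀ * (G τ x₀ * W x₀ - W x₀ * (A τ x₀)ᵀ)
          - ((G τ x₀ * W x₀ - W x₀ * (A τ x₀)ᵀ) * (A κ x₀)ᵀ
              + W x₀ * (matPDeriv τ (A κ) x₀)ᵀ) := by
      intro κ τ
      rw [matPDeriv_sub τ (fun x => G κ x * W x) (fun x => W x * (A κ x)ᵀ)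
            (mul_entry_diff (hGd κ) hWd)
            (mul_entry_diff hWd (fun i j => hAd κ j i)),
          matPDeriv_mul τ (G κ) W (hGd κ) hWd,
          matPDeriv_mul τ W (fun x => (A κ x)ᵀ) hWd (fun i j => hAd κ j i),
          matPDeriv_transpose τ (A κ), hlift τ x₀ hx₀]
    have h1 : matPDeriv ν (fun x => G μ x * W x - W x * (A μ x)ᵀ) x₀
        = matPDeriv μ (fun x => G ν x * W x - W x * (A ν x)ᵀ) x₀ := by
      have e1 : matPDeriv ν (fun x => matPDeriv μ W x) x₀
          = matPDeriv ν (fun x => G μ x * W x - W x * (A μ x)ᵀ) x₀ :=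
        matPDeriv_congr_nhds ν hU hx₀ (fun x hx => hlift μ x hx)
      have e3 : matPDeriv μ (fun x => matPDeriv ν W x) x₀
          = matPDeriv μ (fun x => G ν x * W x - W x * (A ν x)ᵀ) x₀ :=
        matPDeriv_congr_nhds μ hU hx₀ (fun x hx => hlift ν x hx)
      have e2 : matPDeriv ν (fun x => matPDeriv μ W x) x₀
          = matPDeriv μ (fun x => matPDeriv ν W x) x₀ := by
        ext i j
        simp only [matPDeriv, of_apply]
        exact swap_second_aux hU hx₀ (hWC2 i j) _ _
      rw [← e1, e2, e3]
    have h2 := (expand μ ν).symm.trans (h1.trans (expand ν μ))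
    ext i j
    have h3 := Matrix.ext_iff.mpr h2 i j
    simp only [Matrix.mul_sub, Matrix.sub_mul, Matrix.mul_add, Matrix.add_mul,
      Matrix.transpose_add, Matrix.transpose_sub, Matrix.transpose_mul,
      Matrix.mul_assoc] at h3 ⊢
    simp only [Matrix.sub_apply, Matrix.add_apply] at h3 ⊢
    linear_combination h3
  -- W₀† W₀ = diag(λ)
  have hD : (W x₀)ᴴ * W x₀ = Matrix.diagonal (fun k => ((lam k : ℝ) : ℂ)) := by
    ext k l
    simp only [Matrix.mul_apply, Matrix.conjTranspose_apply, hW₀, Matrix.of_apply,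
      Matrix.diagonal_apply]
    have hterm : ∀ i, star ((Real.sqrt (lam k) : ℂ) * φ k i) * ((Real.sqrt (lam l) : ℂ) * φ l i)
        = (Real.sqrt (lam k) : ℂ) * (Real.sqrt (lam l) : ℂ) * (star (φ k i) * φ l i) := by
      intro i
      simp only [star_mul', Complex.star_def, Complex.conj_ofReal]
      ring
    rw [Finset.sum_congr rfl (fun i _ => hterm i), ← Finset.mul_sum]
    have ho := hortho k l
    simp only [dotProduct, Pi.star_apply] at ho
    rw [ho]
    rcases eq_or_ne k l with h | h
    · subst h
      simp [← Complex.ofReal_mul, Real.mul_self_sqrt (hlam k).le]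
    · simp [h]
  -- entries of W₀† M W₀
  have hWCW : ∀ (M : Matrix (Fin n) (Fin n) ℂ) (k l : Fin r),
      ((W x₀)ᴴ * (M * W x₀)) k l
        = (Real.sqrt (lam k) : ℂ) * ((Real.sqrt (lam l) : ℂ)
            * (star (φ k) ⬝ᵥ M.mulVec (φ l))) := by
    intro M k l
    simp only [Matrix.mul_apply, Matrix.conjTranspose_apply, hW₀, Matrix.of_apply,
      dotProduct, Matrix.mulVec, Pi.star_apply, Finset.mul_sum]
    refine Finset.sum_congr rfl fun i _ => ?_
    simp only [star_mul', Complex.star_def, Complex.conj_ofReal, Finset.mul_sum,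
      Finset.sum_mul]
    refine Finset.sum_congr rfl fun j _ => ?_
    ring
  -- anti-Hermiticity of F
  have hFH : ∀ μ ν : Fin d, (matPDeriv μ (A ν) x₀ - matPDeriv ν (A μ) x₀
        + (A μ x₀ * A ν x₀ - A ν x₀ * A μ x₀))ᴴ
      = -(matPDeriv μ (A ν) x₀ - matPDeriv ν (A μ) x₀
        + (A μ x₀ * A ν x₀ - A ν x₀ * A μ x₀)) := by
    intro μ ν
    simp only [Matrix.conjTranspose_add, Matrix.conjTranspose_sub, Matrix.conjTranspose_mul,
      hdAA, hAAnti _ x₀ hx₀, Matrix.neg_mul, Matrix.mul_neg, neg_neg]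
    noncomm_ring
  -- spectral solution of the Sylvester equation: entries of F
  have key2 : ∀ (μ ν : Fin d) (k l : Fin r),
      ((lam k : ℂ) + (lam l : ℂ)) * (matPDeriv μ (A ν) x₀ - matPDeriv ν (A μ) x₀
          + (A μ x₀ * A ν x₀ - A ν x₀ * A μ x₀)) l k
        = -(2 * ((W x₀)ᴴ * ((G μ x₀ * G ν x₀ - G ν x₀ * G μ x₀) * W x₀)) k l) := by
    intro μ ν k l
    have hCH : (G μ x₀ * G ν x₀ - G ν x₀ * G μ x₀)ᴴ
        = -(G μ x₀ * G ν x₀ - G ν x₀ * G μ x₀) := by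
      simp only [Matrix.conjTranspose_sub, Matrix.conjTranspose_mul,
        (hGHerm μ x₀ hx₀).eq, (hGHerm ν x₀ hx₀).eq]
      noncomm_ring
    have hFt := ct_transpose_of_anti (hFH μ ν)
    have ha0 := congrArg (fun M => (W x₀)ᴴ * M) (key1 μ ν)
    have hb0 := congrArg (fun M => Mᴴ * W x₀) (key1 μ ν)
    rw [← Matrix.mul_assoc, hD, Matrix.mul_sub] at ha0
    rw [Matrix.conjTranspose_mul, hFt, Matrix.conjTranspose_sub,
      Matrix.conjTranspose_mul, Matrix.conjTranspose_mul,
      Matrix.conjTranspose_sub, hdGH μ ν, hdGH ν μ, hCH] at hb0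
    simp only [Matrix.neg_mul, Matrix.mul_neg, Matrix.sub_mul, Matrix.add_mul,
      Matrix.mul_assoc, neg_neg, sub_neg_eq_add] at hb0
    rw [hD] at hb0
    have ha := Matrix.ext_iff.mpr ha0 k l
    have hb := Matrix.ext_iff.mpr hb0 k l
    simp only [Matrix.sub_mul, Matrix.mul_sub, Matrix.add_mul, Matrix.mul_add,
      Matrix.mul_assoc] at ha hb ⊢
    simp only [Matrix.diagonal_mul, Matrix.mul_diagonal, Matrix.sub_apply, Matrix.add_apply,
      Matrix.neg_apply, Matrix.transpose_apply] at ha hb ⊢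
    linear_combination ha - hb
  -- the entry formula for F
  have hFentry : ∀ (μ ν : Fin d) (l k : Fin r),
      (matPDeriv μ (A ν) x₀ - matPDeriv ν (A μ) x₀
          + (A μ x₀ * A ν x₀ - A ν x₀ * A μ x₀)) l k
        = -(((2 * Real.sqrt (lam k) * Real.sqrt (lam l) / (lam k + lam l) : ℝ) : ℂ)
            * (star (φ k) ⬝ᵥ (G μ x₀ * G ν x₀ - G ν x₀ * G μ x₀).mulVec (φ l))) := by
    intro μ ν l k
    have h := key2 μ ν k l
    rw [hWCW] at h
    have hc : ((lam k : ℂ) + (lam l : ℂ)) ≠ 0 := by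
      rw [← Complex.ofReal_add]
      exact_mod_cast ne_of_gt (add_pos (hlam k) (hlam l))
    push_cast
    rw [div_mul_eq_mul_div, ← neg_div, eq_div_iff hc]
    linear_combination h
  -- the trace formula
  have htr : ∀ μ ν α β : Fin d,
      Matrix.trace ((matPDeriv μ (A ν) x₀ - matPDeriv ν (A μ) x₀
            + (A μ x₀ * A ν x₀ - A ν x₀ * A μ x₀)) *
          (matPDeriv α (A β) x₀ - matPDeriv β (A α) x₀
            + (A α x₀ * A β x₀ - A β x₀ * A α x₀)))
        = 4 * ∑ ℓ : Fin r, ∑ m : Fin r,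
            ((lam ℓ * lam m / (lam ℓ + lam m) ^ 2 : ℝ) : ℂ) *
              (star (φ ℓ) ⬝ᵥ (G μ x₀ * G ν x₀ - G ν x₀ * G μ x₀).mulVec (φ m)) *
              (star (φ m) ⬝ᵥ (G α x₀ * G β x₀ - G β x₀ * G α x₀).mulVec (φ ℓ)) := by
    intro μ ν α β
    rw [Matrix.trace]
    simp only [Matrix.diag_apply, Matrix.mul_apply]
    rw [Finset.sum_comm, Finset.mul_sum]
    refine Finset.sum_congr rfl fun ℓ _ => ?_
    rw [Finset.mul_sum]
    refine Finset.sum_congr rfl fun m _ => ?_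
    rw [hFentry μ ν m ℓ, hFentry α β ℓ m, neg_mul_neg]
    have h1 := Real.mul_self_sqrt (hlam ℓ).le
    have h2 := Real.mul_self_sqrt (hlam m).le
    have hr : (2 * Real.sqrt (lam ℓ) * Real.sqrt (lam m) / (lam ℓ + lam m))
          * (2 * Real.sqrt (lam m) * Real.sqrt (lam ℓ) / (lam m + lam ℓ))
        = 4 * (lam ℓ * lam m / (lam ℓ + lam m) ^ 2) := by
      rw [div_mul_div_comm]
      have hnum : 2 * Real.sqrt (lam ℓ) * Real.sqrt (lam m)
          * (2 * Real.sqrt (lam m) * Real.sqrt (lam ℓ)) = 4 * (lam ℓ * lam m) := by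
        linear_combination (4 * Real.sqrt (lam m) * Real.sqrt (lam m)) * h1
          + (4 * lam ℓ) * h2
      have hden : (lam ℓ + lam m) * (lam m + lam ℓ) = (lam ℓ + lam m) ^ 2 := by ring
      rw [hnum, hden, mul_div_assoc]
    have hc := congrArg (fun t : ℝ => (t : ℂ)) hr
    push_cast at hc ⊢
    linear_combination (star (φ ℓ) ⬝ᵥ (G μ x₀ * G ν x₀ - G ν x₀ * G μ x₀).mulVec (φ m))
      * (star (φ m) ⬝ᵥ (G α x₀ * G β x₀ - G β x₀ * G α x₀).mulVec (φ ℓ)) * hc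
  -- final assembly
  rw [neg_mul, neg_inj, Finset.mul_sum]
  refine Finset.sum_congr rfl fun μ _ => ?_
  rw [Finset.mul_sum]
  refine Finset.sum_congr rfl fun ν _ => ?_
  rw [Finset.mul_sum]
  refine Finset.sum_congr rfl fun α _ => ?_
  rw [Finset.mul_sum]
  refine Finset.sum_congr rfl fun β _ => ?_
  rw [htr μ ν α β]
  ring
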